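/- Every connected, locally finite, vertex transitive graph with at least one thick end has infinite weak cop number. -/

import Mathlib

open SimpleGraph

universe u

variable {V : Type u}

/-- The ball of radius `n` around `v`: vertices reachable from `v` at geodesic distance at most `n`. -/
def gBall (G : SimpleGraph V) (v : V) (n : ℕ) : Set V :=
  {u | G.Reachable v u ∧ G.dist v u ≤ n}

/-- A ray: a one-sided infinite path, given by an injective map `ℕ → V` with consecutive
vertices adjacent. -/
def IsRay (G : SimpleGraph V) (f : ℕ → V) : Prop :=
  Function.Injective f ∧ ∀ n, G.Adj (f n) (f (n + 1))

/-- A nonempty finite path given as a list of pairwise distinct vertices with consecutive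
vertices adjacent. -/
def IsPathList (G : SimpleGraph V) (l : List V) : Prop :=
  l ≠ [] ∧ l.Chain' G.Adj ∧ l.Nodup

/-- A finite path joining the vertex set `A` to the vertex set `B`. -/
def Joins (G : SimpleGraph V) (A B : Set V) (l : List V) : Prop :=
  IsPathList G l ∧ (∃ a ∈ A, l.head? = some a) ∧ ∃ b ∈ B, l.getLast? = some b

/-- Two rays lie in the same end iff they are joined by infinitely many pairwise
vertex-disjoint paths. -/
def SameEnd (G : SimpleGraph V) (f g : ℕ → V) : Prop :=
  ∃ F : ℕ → List V,
    (∀ i, Joins G (Set.range f) (Set.range g) (F i)) ∧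
    ∀ i j, i ≠ j → ∀ v, v ∈ F i → v ∉ F j

/-- The end represented by the ray `r` is thick: it contains arbitrarily large families of
pairwise vertex-disjoint rays. -/
def ThickEnd (G : SimpleGraph V) (r : ℕ → V) : Prop :=
  ∀ n : ℕ, ∃ F : Fin n → ℕ → V,
    (∀ i, IsRay G (F i)) ∧ (∀ i, SameEnd G (F i) r) ∧
    ∀ i j, i ≠ j → Disjoint (Set.range (F i)) (Set.range (F j))

/-- A graph is vertex transitive if its automorphism group acts transitively on vertices. -/
def VertexTransitive (G : SimpleGraph V) : Prop :=
  ∀ u v : V, ∃ e : G ≃g G, e u = v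

/-- The robber-position history after the robber's move number `t`:
`[r t, r (t-1), ..., r 0]`. -/
def histList (r : ℕ → V) (t : ℕ) : List V :=
  ((List.range (t + 1)).map r).reverse

/-- A cop strategy for `k` cops (a function of the robber-position history) is legal for
speed `s_c` if each cop moves distance at most `s_c` per round. -/
def CopLegal (G : SimpleGraph V) (k s_c : ℕ) (S : List V → Fin k → V) : Prop :=
  ∀ (h : List V) (u : V) (i : Fin k), G.dist (S h i) (S (u :: h) i) ≤ s_c

/-- A legal robber play against the cop strategy `S`: the robber starts at distance `> ρ`
from every cop, and in each round moves along a path of length at most `s_r` all of whose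
vertices stay at distance `> ρ` from every cop. -/
def RobberPlayLegal (G : SimpleGraph V) (k s_r ρ : ℕ) (S : List V → Fin k → V)
    (r : ℕ → V) (w : ℕ → List V) : Prop :=
  (∀ i : Fin k, ρ < G.dist (S [] i) (r 0)) ∧
  ∀ t : ℕ, (w t).Chain' G.Adj ∧ (w t).head? = some (r t) ∧
    (w t).getLast? = some (r (t + 1)) ∧ (w t).length ≤ s_r + 1 ∧
    ∀ u ∈ w t, ∀ i : Fin k, ρ < G.dist (S (histList r t) i) u

/-- The robber visits the ball `B(R, v)` infinitely often. -/
def RobberVisits (G : SimpleGraph V) (v : V) (R : ℕ) (r : ℕ → V) : Prop :=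
  ∀ N : ℕ, ∃ t : ℕ, N ≤ t ∧ r t ∈ gBall G v R

/-- In the weak game, after the cops fix speed `s_c` and capture radius `ρ`, the robber can
choose a speed `s_r`, a base vertex `v` and a radius `R > ρ` and defeat every legal
cop strategy for `k` cops. -/
def RobberBeats (G : SimpleGraph V) (k s_c ρ : ℕ) : Prop :=
  ∃ s_r : ℕ, ∃ v : V, ∃ R : ℕ, ρ < R ∧
    ∀ S : List V → Fin k → V, CopLegal G k s_c S →
      ∃ r w, RobberPlayLegal G k s_r ρ S r w ∧ RobberVisits G v R r

/-- The robber wins the weak game against `k` cops. -/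
def RobberWinsWeak (G : SimpleGraph V) (k : ℕ) : Prop :=
  ∀ s_c ρ : ℕ, RobberBeats G k s_c ρ

/-- `k` cops win the weak game: the cops can choose `s_c` and `ρ` so that for every choice
of `s_r`, `v` and `R > ρ` by the robber there is a legal cop strategy against which no
legal robber play visits `B(R, v)` infinitely often. -/
def CopsWinWeak (G : SimpleGraph V) (k : ℕ) : Prop :=
  ∃ s_c ρ : ℕ, ∀ (s_r : ℕ) (v : V) (R : ℕ), ρ < R →
    ∃ S : List V → Fin k → V, CopLegal G k s_c S ∧
      ∀ r w, RobberPlayLegal G k s_r ρ S r w → ¬ RobberVisits G v R r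

/-! ### Auxiliary lemmas -/

section Aux

lemma iso_dist_le (G : SimpleGraph V) (e : G ≃g G) (u w : V) :
    G.dist (e u) (e w) ≤ G.dist u w := by
  by_cases hr : G.Reachable u w
  · obtain ⟨p, hp⟩ := hr.exists_walk_length_eq_dist
    calc G.dist (e u) (e w) ≤ (p.map e.toHom).length := SimpleGraph.dist_le _
    _ = p.length := SimpleGraph.Walk.length_map _ _
    _ = G.dist u w := hp
  · rw [SimpleGraph.dist_eq_zero_of_not_reachable hr]
    rw [SimpleGraph.dist_eq_zero_of_not_reachable]
    intro hre
    apply hr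
    have := hre.map e.symm.toHom
    simpa using this

lemma iso_dist (G : SimpleGraph V) (e : G ≃g G) (u w : V) :
    G.dist (e u) (e w) = G.dist u w := by
  refine le_antisymm (iso_dist_le G e u w) ?_
  have := iso_dist_le G e.symm (e u) (e w)
  simpa using this

lemma iso_reachable (G : SimpleGraph V) (e : G ≃g G) (u w : V) :
    G.Reachable (e u) (e w) ↔ G.Reachable u w := by
  constructor
  · intro h; have := h.map e.symm.toHom; simpa using this
  · intro h; exact h.map e.toHom

lemma gBall_image (G : SimpleGraph V) (e : G ≃g G) (x : V) (n : ℕ) :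
    e '' gBall G x n = gBall G (e x) n := by
  ext y
  constructor
  · rintro ⟨u, ⟨h1, h2⟩, rfl⟩
    exact ⟨(iso_reachable G e x u).2 h1, by rw [iso_dist]; exact h2⟩
  · rintro ⟨h1, h2⟩
    refine ⟨e.symm y, ⟨?_, ?_⟩, by simp⟩
    · have : G.Reachable (e.symm (e x)) (e.symm y) := h1.map e.symm.toHom
      simpa using this
    · have := iso_dist G e.symm (e x) y
      simp at this
      rw [this]; exact h2

lemma walk_last_step {G : SimpleGraph V} {x u : V} (p : G.Walk x u) :
    u = x ∨ ∃ (y : V) (q : G.Walk x y), G.Adj y u ∧ q.length + 1 ≤ p.length := by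
  induction p with
  | nil => left; rfl
  | @cons x z u h q ih =>
    rcases ih with rfl | ⟨y, q', hadj, hlen⟩
    · right; exact ⟨x, SimpleGraph.Walk.nil, h, by simp⟩
    · right; exact ⟨y, SimpleGraph.Walk.cons h q', hadj, by simp; omega⟩

lemma gBall_finite (G : SimpleGraph V) (hlf : ∀ x : V, (G.neighborSet x).Finite)
    (x : V) (n : ℕ) : (gBall G x n).Finite := by
  induction n with
  | zero =>
    apply Set.Finite.subset (Set.finite_singleton x)
    rintro u ⟨h1, h2⟩
    have : G.dist x u = 0 := Nat.le_zero.mp h2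
    have := (h1.dist_eq_zero_iff).mp this
    simp [this]
  | succ n ih =>
    have hsub : gBall G x (n+1) ⊆ gBall G x n ∪ ⋃ y ∈ gBall G x n, G.neighborSet y := by
      rintro u ⟨h1, h2⟩
      obtain ⟨p, hp⟩ := h1.exists_walk_length_eq_dist
      rcases walk_last_step p with h | ⟨y, q, hadj, hd⟩
      · subst h
        exact Or.inl ⟨SimpleGraph.Reachable.refl _, by simp [SimpleGraph.dist_self]⟩
      · right
        rw [hp] at hd
        have hy : y ∈ gBall G x n := ⟨⟨q⟩, le_trans (SimpleGraph.dist_le q) (by omega)⟩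
        exact Set.mem_biUnion hy hadj
    exact Set.Finite.subset (Set.Finite.union ih (Set.Finite.biUnion ih (fun y _ => hlf y))) hsub

lemma touch_count {ι : Type*} (A : ι → Set V) (hd : ∀ i j, i ≠ j → Disjoint (A i) (A j))
    (X : Set V) (hX : X.Finite) :
    {i | (A i ∩ X).Nonempty}.Finite ∧ {i | (A i ∩ X).Nonempty}.ncard ≤ X.ncard := by
  set s := {i | (A i ∩ X).Nonempty} with hs
  rcases s.eq_empty_or_nonempty with h | ⟨i₀, hi₀⟩
  · rw [h]; simp
  · have hv : V := hi₀.choose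
    classical
    set f : ι → V := fun i => if h : (A i ∩ X).Nonempty then h.choose else hv with hf
    have hmem : ∀ i ∈ s, f i ∈ A i ∩ X := by
      intro i hi
      have hi' : (A i ∩ X).Nonempty := hi
      have : f i = Exists.choose hi' := by
        simp only [hf]; rw [dif_pos hi']
      rw [this]
      exact Exists.choose_spec hi'
    have hinj : Set.InjOn f s := by
      intro i hi j hj hij
      by_contra hne
      have h1 := hmem i hi
      have h2 := hmem j hj
      rw [hij] at h1
      exact (hd i j hne).ne_of_mem h1.1 h2.1 rfl
    have hmapsto : ∀ i ∈ s, f i ∈ X := fun i hi => (hmem i hi).2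
    constructor
    · exact Set.Finite.of_finite_image (hX.subset (by rintro _ ⟨i, hi, rfl⟩; exact hmapsto i hi)) hinj
    · exact Set.ncard_le_ncard_of_injOn f hmapsto hinj hX

lemma fin_avoid {n : ℕ} (P : Fin n → Prop) (h : {a | P a}.ncard < n) : ∃ a, ¬ P a := by
  by_contra hc
  push_neg at hc
  have : {a | P a} = Set.univ := by ext a; simp [hc a]
  rw [this, Set.ncard_univ] at h
  simp at h

lemma iUnion_card_le {k M : ℕ} (B : Fin k → Set V) (hfin : ∀ i, (B i).Finite)
    (hcard : ∀ i, (B i).ncard ≤ M) :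
    (⋃ i, B i).Finite ∧ (⋃ i, B i).ncard ≤ k * M := by
  induction k with
  | zero => simp
  | succ k ih =>
    have heq : (⋃ i : Fin (k+1), B i) = (⋃ i : Fin k, B i.castSucc) ∪ B (Fin.last k) := by
      ext x
      simp only [Set.mem_iUnion, Set.mem_union]
      constructor
      · rintro ⟨i, hi⟩
        induction i using Fin.lastCases with
        | last => exact Or.inr hi
        | cast i => exact Or.inl ⟨i, hi⟩
      · rintro (⟨i, hi⟩ | hi)
        · exact ⟨i.castSucc, hi⟩
        · exact ⟨Fin.last k, hi⟩
    obtain ⟨ihf, ihc⟩ := ih (fun i => B i.castSucc) (fun i => hfin _) (fun i => hcard _)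
    rw [heq]
    refine ⟨ihf.union (hfin _), ?_⟩
    calc ((⋃ i : Fin k, B i.castSucc) ∪ B (Fin.last k)).ncard
        ≤ (⋃ i : Fin k, B i.castSucc).ncard + (B (Fin.last k)).ncard := Set.ncard_union_le _ _
      _ ≤ k * M + M := Nat.add_le_add ihc (hcard _)
      _ = (k+1) * M := by ring

/-- ascending list along a 1-way infinite path -/
def asc (f : ℕ → V) (i len : ℕ) : List V := (List.range (len+1)).map (fun m => f (i+m))

lemma asc_ne_nil (f : ℕ → V) (i len : ℕ) : asc f i len ≠ [] := by
  simp [asc, List.range_succ]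

lemma asc_succ (f : ℕ → V) (i len : ℕ) :
    asc f i (len+1) = asc f i len ++ [f (i+len+1)] := by
  simp [asc, List.range_succ, Nat.add_assoc]

lemma asc_head? (f : ℕ → V) (i len : ℕ) : (asc f i len).head? = some (f i) := by
  induction len with
  | zero => simp [asc, List.range_succ]
  | succ n ih => rw [asc_succ]; rw [List.head?_append]; rw [ih]; rfl

lemma asc_getLast? (f : ℕ → V) (i len : ℕ) : (asc f i len).getLast? = some (f (i+len)) := by
  cases len with
  | zero => simp [asc, List.range_succ]
  | succ n => rw [asc_succ, List.getLast?_concat]; congr 2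

lemma asc_length (f : ℕ → V) (i len : ℕ) : (asc f i len).length = len + 1 := by
  simp [asc]

lemma asc_chain' {G : SimpleGraph V} {f : ℕ → V} (hadj : ∀ n, G.Adj (f n) (f (n+1)))
    (i len : ℕ) : (asc f i len).Chain' G.Adj := by
  induction len with
  | zero => simp [asc, List.range_succ]; exact List.isChain_singleton _
  | succ n ih =>
    rw [asc_succ]
    apply List.IsChain.append ih (by simp)
    intro x hx y hy
    rw [asc_getLast?] at hx
    simp at hx hy
    subst hx; subst hy
    exact hadj _

lemma asc_mem {f : ℕ → V} {u : V} {i len : ℕ} (h : u ∈ asc f i len) :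
    ∃ m, i ≤ m ∧ m ≤ i + len ∧ u = f m := by
  simp only [asc, List.mem_map, List.mem_range] at h
  obtain ⟨m, hm, rfl⟩ := h
  exact ⟨i + m, by omega, by omega, rfl⟩

/-- a list along `f` from `f i` to `f j` (either direction). -/
noncomputable def seg (f : ℕ → V) (i j : ℕ) : List V :=
  if i ≤ j then asc f i (j - i) else (asc f j (i - j)).reverse

lemma seg_spec {G : SimpleGraph V} {f : ℕ → V} (hadj : ∀ n, G.Adj (f n) (f (n+1)))
    (i j : ℕ) :
    (seg f i j).Chain' G.Adj ∧ (seg f i j).head? = some (f i) ∧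
      (seg f i j).getLast? = some (f j) ∧ (seg f i j).length ≤ max i j + 1 ∧
      ∀ u ∈ seg f i j, ∃ m, min i j ≤ m ∧ m ≤ max i j ∧ u = f m := by
  by_cases h : i ≤ j
  · rw [seg, if_pos h]
    refine ⟨asc_chain' hadj _ _, ?_, ?_, ?_, ?_⟩
    · rw [asc_head?]
    · rw [asc_getLast?]; congr 2; omega
    · rw [asc_length]; omega
    · intro u hu; obtain ⟨m, h1, h2, rfl⟩ := asc_mem hu; exact ⟨m, by omega, by omega, rfl⟩
  · rw [seg, if_neg h]
    have hc : (asc f j (i - j)).reverse.Chain' G.Adj := by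
      refine List.isChain_reverse.mpr ?_
      apply List.IsChain.imp ?_ (asc_chain' hadj _ _)
      intro a b hab
      exact hab.symm
    refine ⟨hc, ?_, ?_, ?_, ?_⟩
    · rw [List.head?_reverse, asc_getLast?]; congr 2; omega
    · rw [List.getLast?_reverse, asc_head?]
    · rw [List.length_reverse, asc_length]; omega
    · intro u hu
      rw [List.mem_reverse] at hu
      obtain ⟨m, h1, h2, rfl⟩ := asc_mem hu; exact ⟨m, by omega, by omega, rfl⟩

lemma seg_ne_nil (f : ℕ → V) (i j : ℕ) : seg f i j ≠ [] := by
  rw [seg]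
  split
  · exact asc_ne_nil _ _ _
  · simp only [ne_eq, List.reverse_eq_nil_iff]
    exact asc_ne_nil _ _ _

/-- glue two lists sharing endpoint/startpoint -/
def glue (l₁ l₂ : List V) : List V := l₁ ++ l₂.tail

lemma glue_ne_nil {l₁ l₂ : List V} (h : l₁ ≠ []) : glue l₁ l₂ ≠ [] := by
  rw [glue]
  simp [h]

lemma glue_spec {R : V → V → Prop} {l₁ l₂ : List V} (h₁ : l₁.Chain' R) (h₂ : l₂.Chain' R)
    (hne₁ : l₁ ≠ []) (hne₂ : l₂ ≠ []) (hx : l₁.getLast? = l₂.head?) :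
    (glue l₁ l₂).Chain' R ∧ (glue l₁ l₂).head? = l₁.head? ∧
      (glue l₁ l₂).getLast? = l₂.getLast? ∧
      (glue l₁ l₂).length + 1 = l₁.length + l₂.length ∧
      ∀ u ∈ glue l₁ l₂, u ∈ l₁ ∨ u ∈ l₂ := by
  obtain ⟨c, t, rfl⟩ : ∃ c t, l₂ = c :: t := by
    cases l₂ with
    | nil => exact absurd rfl hne₂
    | cons c t => exact ⟨c, t, rfl⟩
  simp only [List.head?_cons] at hx
  replace h₂ := List.isChain_cons.mp h₂
  refine ⟨?_, ?_, ?_, ?_, ?_⟩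
  · rw [glue]; refine List.isChain_append.mpr ?_
    refine ⟨h₁, h₂.2, ?_⟩
    intro x hxx y hy
    simp only [List.tail_cons] at hy
    rw [hx] at hxx
    simp at hxx
    subst hxx
    exact h₂.1 y hy
  · rw [glue, List.head?_append]
    cases l₁ with
    | nil => exact absurd rfl hne₁
    | cons a s => rfl
  · rw [glue, List.tail_cons, List.getLast?_append]
    cases t with
    | nil =>
      simp only [List.getLast?_nil, Option.or]
      rw [hx]
      rfl
    | cons b s =>
      have : (b :: s).getLast? ≠ none := by
        simp [List.getLast?_eq_none_iff]
      rcases ho : (b :: s).getLast? with _ | z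
      · exact absurd ho this
      · rw [show (c :: b :: s).getLast? = (b :: s).getLast? from rfl, ho]; rfl
  · rw [glue, List.length_append, List.tail_cons, List.length_cons]
    omega
  · intro u hu
    rw [glue, List.mem_append] at hu
    rcases hu with h | h
    · exact Or.inl h
    · exact Or.inr (List.mem_of_mem_tail h)

lemma chain'_rev {G : SimpleGraph V} {l : List V} (h : l.Chain' G.Adj) :
    l.reverse.Chain' G.Adj := by
  refine List.isChain_reverse.mpr ?_
  exact List.IsChain.imp (fun a b hab => hab.symm) h

noncomputable def recSeq {α : Type*} (x0 : α) (f : ℕ → α → α) : ℕ → α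
  | 0 => x0
  | (s+1) => f s (recSeq x0 f s)

@[simp] lemma recSeq_zero {α : Type*} (x0 : α) (f : ℕ → α → α) : recSeq x0 f 0 = x0 := rfl

@[simp] lemma recSeq_succ {α : Type*} (x0 : α) (f : ℕ → α → α) (s : ℕ) :
    recSeq x0 f (s+1) = f s (recSeq x0 f s) := rfl

lemma exists_selection (Q : ℕ → ℕ → List V) (r : ℕ → V)
    (hex : ∀ a B, ∃ p : ℕ × ℕ, (Q a p.1).getLast? = some (r p.2) ∧ B < p.2) :
    ∃ sel : ℕ → ℕ × ℕ,
      (∀ s, (Q s (sel s).1).getLast? = some (r (sel s).2)) ∧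
      (∀ s, (sel s).2 < (sel (s+1)).2) := by
  classical
  have c : ∀ a B, {p : ℕ × ℕ // (Q a p.1).getLast? = some (r p.2) ∧ B < p.2} :=
    fun a B => Classical.indefiniteDescription _ (hex a B)
  set sel : ℕ → ℕ × ℕ :=
    recSeq (c 0 0).val (fun s prev => (c (s+1) prev.2).val) with hsel
  refine ⟨sel, ?_, ?_⟩
  · intro s
    cases s with
    | zero => exact (c 0 0).property.1
    | succ s => exact (c (s+1) (sel s).2).property.1
  · intro s
    exact (c (s+1) (sel s).2).property.2

lemma sel_strict_mono {sel : ℕ → ℕ × ℕ} (h : ∀ s, (sel s).2 < (sel (s+1)).2) :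
    ∀ s t, s < t → (sel s).2 < (sel t).2 := by
  intro s t hst
  induction t with
  | zero => omega
  | succ t ih =>
    rcases Nat.lt_succ_iff_lt_or_eq.mp hst with h' | rfl
    · exact lt_trans (ih h') (h t)
    · exact h s

lemma exists_high_landing (P : ℕ → List V) (r : ℕ → V)
    (hd : ∀ m m', m ≠ m' → ∀ v ∈ P m, v ∉ P m')
    (hlast : ∀ m, ∃ idx, (P m).getLast? = some (r idx)) (B : ℕ) :
    ∃ p : ℕ × ℕ, (P p.1).getLast? = some (r p.2) ∧ B < p.2 := by
  by_contra hc
  push_neg at hc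
  classical
  set g : ℕ → V := fun m => r (hlast m).choose with hg
  have hgmem : ∀ m, g m ∈ P m := fun m => List.mem_of_getLast? (hlast m).choose_spec
  have hginj : Function.Injective g := by
    intro m m' hmm
    by_contra hne
    exact hd m m' hne (g m) (hgmem m) (by rw [hmm]; exact hgmem m')
  have hgball : ∀ m, g m ∈ r '' Set.Iic B := by
    intro m
    refine ⟨(hlast m).choose, ?_, rfl⟩
    simp only [Set.mem_Iic]
    have h2 := hc (m, (hlast m).choose)
    simp only at h2
    have := h2 (hlast m).choose_spec
    omega
  have : (r '' Set.Iic B).Infinite := Set.infinite_of_injective_forall_mem hginj hgball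
  exact this ((Set.finite_Iic B).image r)

lemma histList_succ (r : ℕ → V) (t : ℕ) :
    histList r (t+1) = r (t+1) :: histList r t := by
  rw [histList, histList, List.range_succ, List.map_append]
  simp

end Aux

/-- Every connected, locally finite, vertex transitive graph with at least one thick end
has infinite weak cop number: for every `k` the robber beats `k` cops in the weak game. -/
theorem stmt9 (G : SimpleGraph V) (hconn : G.Connected)
    (hlf : ∀ x : V, (G.neighborSet x).Finite)
    (htrans : VertexTransitive G)
    (r : ℕ → V) (hr : IsRay G r) (hthick : ThickEnd G r) :
    ∀ k : ℕ, RobberWinsWeak G k := by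
  intro k s_c ρ
  classical
  -- uniform ball cardinality
  set M : ℕ → ℕ := fun m => (gBall G (r 0) m).ncard with hM
  have hball_fin : ∀ (x : V) (m : ℕ), (gBall G x m).Finite := gBall_finite G hlf
  have hball_card : ∀ (x : V) (m : ℕ), (gBall G x m).ncard = M m := by
    intro x m
    obtain ⟨e, he⟩ := htrans (r 0) x
    show (gBall G x m).ncard = (gBall G (r 0) m).ncard
    rw [← Set.ncard_image_of_injective (gBall G (r 0) m) e.injective]
    congr 1
    rw [gBall_image, he]
  -- constants
  set M₂ : ℕ := M (ρ + 2 * s_c) with hM₂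
  set M₀ : ℕ := M ρ with hM₀
  set n : ℕ := k * M₂ + k * M₀ + 2 with hn
  set T : ℕ := k * M₀ * (n + 1) + 1 with hT
  have npos : 0 < n := by omega
  -- get the rays
  obtain ⟨F, hFray, hFsame, hFdisj⟩ := hthick n
  -- get the path families
  choose 𝒬 hJ hD using hFsame
  -- landing existence for each family
  have hex : ∀ (a : ℕ) (B : ℕ), ∃ p : ℕ × ℕ,
      (𝒬 ⟨a % n, Nat.mod_lt a npos⟩ p.1).getLast? = some (r p.2) ∧ B < p.2 := by
    intro a B
    apply exists_high_landing
    · exact hD _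
    · intro m
      obtain ⟨_, _, ⟨b, ⟨idx, rfl⟩, hb2⟩⟩ := hJ ⟨a % n, Nat.mod_lt a npos⟩ m
      exact ⟨idx, hb2⟩
  obtain ⟨sel, hsel1, hsel2⟩ :=
    exists_selection (fun s m => 𝒬 ⟨s % n, Nat.mod_lt s npos⟩ m) r hex
  have hselmono := sel_strict_mono hsel2
  -- the band data
  set step : Fin n → ℕ → ℕ := fun a j => j * n + a.val with hstep
  have hstep_mod : ∀ (a : Fin n) (j : ℕ), (⟨(step a j) % n, Nat.mod_lt _ npos⟩ : Fin n) = a := by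
    intro a j
    apply Fin.ext
    simp only [hstep]
    rw [Nat.add_comm, Nat.add_mul_mod_self_right]
    exact Nat.mod_eq_of_lt a.isLt
  set QL : Fin n → ℕ → List V := fun a j => 𝒬 a (sel (step a j)).1 with hQL
  set Land : Fin n → ℕ → ℕ := fun a j => (sel (step a j)).2 with hLand
  have hQLlast : ∀ (a : Fin n) (j : ℕ), (QL a j).getLast? = some (r (Land a j)) := by
    intro a j
    have := hsel1 (step a j)
    rw [hstep_mod a j] at this
    exact this
  have hQLpath : ∀ (a : Fin n) (j : ℕ), IsPathList G (QL a j) := fun a j => (hJ a _).1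
  have hQLhead : ∀ (a : Fin n) (j : ℕ), ∃ idx, (QL a j).head? = some (F a idx) := by
    intro a j
    obtain ⟨_, ⟨b, ⟨idx, rfl⟩, hb2⟩, _⟩ := hJ a (sel (step a j)).1
    exact ⟨idx, hb2⟩
  choose HIdx hHIdx using hQLhead
  set lo : ℕ → ℕ := fun j => (sel (j * n)).2 with hlo
  set hi : ℕ → ℕ := fun j => (sel (j * n + (n - 1))).2 with hhi
  have hLand_mem : ∀ (a : Fin n) (j : ℕ), lo j ≤ Land a j ∧ Land a j ≤ hi j := by
    intro a j
    constructor
    · rcases Nat.eq_zero_or_pos a.val with h | h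
      · simp [hLand, hlo, hstep, h]
      · exact le_of_lt (hselmono _ _ (show j * n < step a j by simp only [hstep]; omega))
    · rcases Nat.lt_or_ge a.val (n-1) with h | h
      · exact le_of_lt (hselmono _ _ (by simp [hstep]; omega))
      · have : a.val = n - 1 := by have := a.isLt; omega
        simp [hLand, hhi, hstep, this]
  have hband_sep : ∀ j j', j < j' → hi j < lo j' := by
    intro j j' hjj
    apply hselmono
    have : j * n + (n-1) < j' * n := by
      have h1 : (j+1) * n ≤ j' * n := Nat.mul_le_mul_right n (by omega)
      have : (j+1) * n = j * n + n := by ring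
      omega
    exact this
  -- the constants for the robber
  set maxH : ℕ := Finset.sup (Finset.univ : Finset (Fin n × Fin T)) (fun p => HIdx p.1 p.2.val) with hmaxH
  set maxQ : ℕ := Finset.sup (Finset.univ : Finset (Fin n × Fin T)) (fun p => (QL p.1 p.2.val).length) with hmaxQ
  set maxHi : ℕ := Finset.sup (Finset.univ : Finset (Fin T)) (fun j => hi j.val) with hmaxHi
  refine ⟨2*maxH + 2*maxQ + 2*maxHi + 10, r 0,
    (Finset.sup (Finset.univ : Finset (Fin n)) (fun a => G.dist (r 0) (F a 0))) + ρ + 1,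
    by omega, ?_⟩
  intro S hS
  have hreach : ∀ u w : V, G.Reachable u w := fun u w => hconn.preconnected u w
  -- basic dist facts
  have hnotball : ∀ (c x : V) (m : ℕ), x ∉ gBall G c m → m < G.dist c x := by
    intro c x m hx
    by_contra hle
    push_neg at hle
    exact hx ⟨hreach c x, hle⟩
  have lipz : ∀ (h : List V) (u x : V) (i : Fin k) (d : ℕ),
      ρ + d + s_c < G.dist (S h i) x → ρ + d < G.dist (S (u :: h) i) x := by
    intro h u x i d hd
    have htri := hconn.dist_triangle (u := S h i) (v := S (u :: h) i) (w := x)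
    have hb := hS h u i
    omega
  -- every history admits a totally clean ray with margin 2*s_c
  have clean_ray : ∀ h : List V, ∃ c : Fin n,
      ∀ x ∈ Set.range (F c), ∀ i, ρ + 2*s_c < G.dist (S h i) x := by
    intro h
    obtain ⟨hXfin, hXcard⟩ := iUnion_card_le (fun i => gBall G (S h i) (ρ + 2*s_c))
      (fun i => hball_fin _ _) (fun i => le_of_eq ((hball_card _ _).trans hM₂.symm))
    obtain ⟨_, hdirtycard⟩ := touch_count (fun a : Fin n => Set.range (F a))
      (fun i j hij => hFdisj i j hij) _ hXfin
    have hlt : {a : Fin n | (Set.range (F a) ∩ ⋃ i, gBall G (S h i) (ρ + 2*s_c)).Nonempty}.ncard < n := by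
      refine lt_of_le_of_lt (le_trans hdirtycard hXcard) ?_
      rw [hn]
      have : 0 < k * M₀ + 2 := Nat.lt_of_lt_of_le (by norm_num : (0:ℕ) < 2) (Nat.le_add_left 2 _)
      omega
    obtain ⟨c, hc⟩ := fin_avoid _ hlt
    refine ⟨c, ?_⟩
    intro x hx i
    have hxX : x ∉ ⋃ i, gBall G (S h i) (ρ + 2*s_c) := fun hmem => hc ⟨x, hx, hmem⟩
    exact hnotball _ _ _ (fun hmem => hxX (Set.mem_iUnion.mpr ⟨i, hmem⟩))
  -- distinct member indices for distinct bands
  have hstep_ne : ∀ (a : Fin n) (j j' : ℕ), j ≠ j' → step a j ≠ step a j' := by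
    intro a j j' hne heq
    simp only [hstep] at heq
    have := Nat.eq_of_mul_eq_mul_right npos (by omega : j * n = j' * n)
    exact hne this
  have hLand_ne : ∀ (a : Fin n) (j j' : ℕ), j ≠ j' → Land a j ≠ Land a j' := by
    intro a j j' hne
    rcases Nat.lt_or_ge (step a j) (step a j') with h | h
    · exact Nat.ne_of_lt (hselmono _ _ h)
    · rcases Nat.lt_or_ge (step a j') (step a j) with h2 | h2
      · exact (Nat.ne_of_lt (hselmono _ _ h2)).symm
      · exact absurd (Nat.le_antisymm h h2).symm (hstep_ne a j j' hne)
  have hQL_idx_ne : ∀ (a : Fin n) (j j' : ℕ), j ≠ j' →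
      (sel (step a j)).1 ≠ (sel (step a j')).1 := by
    intro a j j' hne heq
    have h1 := hQLlast a j
    have h2 := hQLlast a j'
    simp only [hQL] at h1 h2
    rw [heq, h2] at h1
    have := hr.1 (Option.some.inj h1)
    exact hLand_ne a j j' hne this.symm
  -- every history admits a clean band
  have clean_band : ∀ h : List V, ∃ j : Fin T,
      (∀ a : Fin n, ∀ u ∈ QL a j.val, ∀ i, ρ < G.dist (S h i) u) ∧
      (∀ m : ℕ, lo j.val ≤ m → m ≤ hi j.val → ∀ i, ρ < G.dist (S h i) (r m)) := by
    intro h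
    obtain ⟨hXfin, hXcard⟩ := iUnion_card_le (fun i => gBall G (S h i) ρ)
      (fun i => hball_fin _ _) (fun i => le_of_eq ((hball_card _ _).trans hM₀.symm))
    set X : Set V := ⋃ i, gBall G (S h i) ρ with hXdef
    -- dirty bands via the path families
    have hSa : ∀ a : Fin n, {j : Fin T | ({x | x ∈ QL a j.val} ∩ X).Nonempty}.Finite ∧
        {j : Fin T | ({x | x ∈ QL a j.val} ∩ X).Nonempty}.ncard ≤ X.ncard := by
      intro a
      apply touch_count
      · intro j j' hne
        rw [Set.disjoint_left]
        intro v hv hv'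
        exact hD a _ _ (hQL_idx_ne a j.val j'.val (fun hc => hne (Fin.ext hc))) v hv hv'
      · exact hXfin
    have hSI : {j : Fin T | ((r '' Set.Icc (lo j.val) (hi j.val)) ∩ X).Nonempty}.Finite ∧
        {j : Fin T | ((r '' Set.Icc (lo j.val) (hi j.val)) ∩ X).Nonempty}.ncard ≤ X.ncard := by
      apply touch_count
      · intro j j' hne
        rw [Set.disjoint_left]
        rintro v ⟨m, hm, rfl⟩ ⟨m', hm', hmm⟩
        have heq := hr.1 hmm.symm
        subst heq
        simp only [Set.mem_Icc] at hm hm'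
        have hvne : j.val ≠ j'.val := fun hc => hne (Fin.ext hc)
        rcases Nat.lt_or_ge j.val j'.val with hlt | hge
        · have := hband_sep _ _ hlt; omega
        · have := hband_sep _ _ (by omega : j'.val < j.val); omega
      · exact hXfin
    obtain ⟨hBQfin, hBQcard⟩ := iUnion_card_le (k := n) (M := k * M₀)
      (fun a : Fin n => {j : Fin T | ({x | x ∈ QL a j.val} ∩ X).Nonempty})
      (fun a => (hSa a).1) (fun a => le_trans (hSa a).2 hXcard)
    have hBadcard : ((⋃ a : Fin n, {j : Fin T | ({x | x ∈ QL a j.val} ∩ X).Nonempty}) ∪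
        {j : Fin T | ((r '' Set.Icc (lo j.val) (hi j.val)) ∩ X).Nonempty}).ncard < T := by
      refine lt_of_le_of_lt (Set.ncard_union_le _ _) ?_
      refine lt_of_le_of_lt (Nat.add_le_add hBQcard (le_trans hSI.2 hXcard)) ?_
      rw [hT]
      have : n * (k * M₀) + k * M₀ = k * M₀ * (n + 1) := by ring
      omega
    have hmemcard : {j : Fin T | j ∈ ((⋃ a : Fin n, {j : Fin T | ({x | x ∈ QL a j.val} ∩ X).Nonempty}) ∪
        {j : Fin T | ((r '' Set.Icc (lo j.val) (hi j.val)) ∩ X).Nonempty})}.ncard < T := by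
      convert hBadcard using 2
      exact Set.setOf_mem_eq
    obtain ⟨j, hj⟩ := fin_avoid _ hmemcard
    simp only [Set.mem_union, Set.mem_iUnion, Set.mem_setOf_eq, not_or, not_exists] at hj
    refine ⟨j, ?_, ?_⟩
    · intro a u hu i
      apply hnotball
      intro hmem
      exact hj.1 a ⟨u, hu, Set.mem_iUnion.mpr ⟨i, hmem⟩⟩
    · intro m h1 h2 i
      apply hnotball
      intro hmem
      exact hj.2 ⟨r m, ⟨m, ⟨h1, h2⟩, rfl⟩, Set.mem_iUnion.mpr ⟨i, hmem⟩⟩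
  -- the property of a good robber move starting from history h
  set PROP : List V → (V × List V) → Prop := fun h p =>
    p.2.Chain' G.Adj ∧ p.2.head? = h.head? ∧ p.2.getLast? = some p.1 ∧
    p.2.length ≤ (2*maxH + 2*maxQ + 2*maxHi + 10) + 1 ∧
    (∀ u ∈ p.2, ∀ i, ρ < G.dist (S h i) u) ∧
    ∃ c'' : Fin n, p.1 = F c'' 0 ∧
      ∀ x ∈ Set.range (F c''), ∀ i, ρ + 2*s_c < G.dist (S h i) x
    with hPROP
  have CORE : ∀ (h : List V) (c : Fin n), h.head? = some (F c 0) →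
      (∀ x ∈ Set.range (F c), ∀ i, ρ + s_c < G.dist (S h i) x) →
      ∃ p : V × List V, PROP h p := by
    intro h c hhead hcur
    obtain ⟨c2, hc2⟩ := clean_ray h
    obtain ⟨j, hbQ, hbI⟩ := clean_band h
    set a1 : List V := asc (F c) 0 (HIdx c j.val) with ha1
    set a2 : List V := QL c j.val with ha2
    set a3 : List V := seg r (Land c j.val) (Land c2 j.val) with ha3
    set a4 : List V := (QL c2 j.val).reverse with ha4
    set a5 : List V := (asc (F c2) 0 (HIdx c2 j.val)).reverse with ha5
    obtain ⟨s3chain, s3head, s3last, s3len, s3mem⟩ :=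
      seg_spec (G := G) hr.2 (Land c j.val) (Land c2 j.val)
    have hQc := hQLpath c j.val
    have hQc2 := hQLpath c2 j.val
    have ne1 : a1 ≠ [] := asc_ne_nil _ _ _
    have ne2 : a2 ≠ [] := hQc.1
    have ne3 : a3 ≠ [] := seg_ne_nil _ _ _
    have ne4 : a4 ≠ [] := by simp only [ha4, ne_eq, List.reverse_eq_nil_iff]; exact hQc2.1
    have ne5 : a5 ≠ [] := by simp only [ha5, ne_eq, List.reverse_eq_nil_iff]; exact asc_ne_nil _ _ _
    have ch1 : a1.Chain' G.Adj := asc_chain' (hFray c).2 _ _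
    have ch2 : a2.Chain' G.Adj := hQc.2.1
    have ch3 : a3.Chain' G.Adj := s3chain
    have ch4 : a4.Chain' G.Adj := chain'_rev hQc2.2.1
    have ch5 : a5.Chain' G.Adj := chain'_rev (asc_chain' (hFray c2).2 _ _)
    have j45 : a4.getLast? = a5.head? := by
      rw [ha4, ha5, List.getLast?_reverse, List.head?_reverse, hHIdx c2 j.val, asc_getLast?]
      simp
    have g45 := glue_spec ch4 ch5 ne4 ne5 j45
    have j34 : a3.getLast? = (glue a4 a5).head? := by
      rw [g45.2.1, s3last, ha4, List.head?_reverse, hQLlast c2 j.val]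
    have g3 := glue_spec ch3 g45.1 ne3 (glue_ne_nil ne4) j34
    have j23 : a2.getLast? = (glue a3 (glue a4 a5)).head? := by
      rw [g3.2.1, ha2, hQLlast c j.val, s3head]
    have g2 := glue_spec ch2 g3.1 ne2 (glue_ne_nil ne3) j23
    have j12 : a1.getLast? = (glue a2 (glue a3 (glue a4 a5))).head? := by
      rw [g2.2.1, ha1, asc_getLast?, ha2, hHIdx c j.val]
      simp
    have g1 := glue_spec ch1 g2.1 ne1 (glue_ne_nil ne2) j12
    refine ⟨(F c2 0, glue a1 (glue a2 (glue a3 (glue a4 a5)))), ?_⟩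
    simp only [hPROP]
    refine ⟨g1.1, ?_, ?_, ?_, ?_, c2, rfl, hc2⟩
    · rw [g1.2.1, ha1, asc_head?, hhead]
    · rw [g1.2.2.1, g2.2.2.1, g3.2.2.1, g45.2.2.1, ha5, List.getLast?_reverse, asc_head?]
    · have l1 : a1.length = HIdx c j.val + 1 := asc_length _ _ _
      have l5 : a5.length = HIdx c2 j.val + 1 := by
        rw [ha5, List.length_reverse]; exact asc_length _ _ _
      have l4 : a4.length = (QL c2 j.val).length := by rw [ha4, List.length_reverse]
      have bh1 : HIdx c j.val ≤ maxH :=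
        Finset.le_sup (f := fun p : Fin n × Fin T => HIdx p.1 p.2.val) (Finset.mem_univ (c, j))
      have bh5 : HIdx c2 j.val ≤ maxH :=
        Finset.le_sup (f := fun p : Fin n × Fin T => HIdx p.1 p.2.val) (Finset.mem_univ (c2, j))
      have bq2 : a2.length ≤ maxQ :=
        Finset.le_sup (f := fun p : Fin n × Fin T => (QL p.1 p.2.val).length) (Finset.mem_univ (c, j))
      have bq4 : (QL c2 j.val).length ≤ maxQ :=
        Finset.le_sup (f := fun p : Fin n × Fin T => (QL p.1 p.2.val).length) (Finset.mem_univ (c2, j))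
      have bl3 : a3.length ≤ maxHi + 1 := by
        refine le_trans s3len ?_
        have b1 := (hLand_mem c j.val).2
        have b2 := (hLand_mem c2 j.val).2
        have bj : hi j.val ≤ maxHi :=
          Finset.le_sup (f := fun j' : Fin T => hi j'.val) (Finset.mem_univ j)
        omega
      have e1 := g1.2.2.2.1
      have e2 := g2.2.2.2.1
      have e3 := g3.2.2.2.1
      have e4 := g45.2.2.2.1
      omega
    · intro u hu i
      rcases g1.2.2.2.2 u hu with h1 | hrest
      · obtain ⟨m, _, _, rfl⟩ := asc_mem h1
        have := hcur _ ⟨m, rfl⟩ i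
        omega
      · rcases g2.2.2.2.2 u hrest with h2 | hrest
        · exact hbQ c u h2 i
        · rcases g3.2.2.2.2 u hrest with h3 | hrest
          · obtain ⟨m, hm1, hm2, rfl⟩ := s3mem u h3
            have b1 := hLand_mem c j.val
            have b2 := hLand_mem c2 j.val
            exact hbI m (by omega) (by omega) i
          · rcases g45.2.2.2.2 u hrest with h4 | h5
            · rw [ha4, List.mem_reverse] at h4
              exact hbQ c2 u h4 i
            · rw [ha5, List.mem_reverse] at h5
              obtain ⟨m, _, _, rfl⟩ := asc_mem h5
              have := hc2 _ ⟨m, rfl⟩ i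
              omega
  -- initial clean ray
  obtain ⟨c₀, hc₀⟩ := clean_ray []
  set package : List V → V × List V := fun h =>
    if hh : ∃ p, PROP h p then hh.choose else (F c₀ 0, []) with hpackage
  have hpack : ∀ h, (∃ p, PROP h p) → PROP h (package h) := by
    intro h hh
    simp only [hpackage, dif_pos hh]
    exact hh.choose_spec
  set H : ℕ → List V := recSeq [F c₀ 0] (fun _ prev => (package prev).1 :: prev) with hHdef
  set rob : ℕ → V := fun t => Nat.casesOn t (F c₀ 0) (fun t' => (package (H t')).1) with hrob
  set w : ℕ → List V := fun t => (package (H t)).2 with hwdef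
  have hH0 : H 0 = [F c₀ 0] := by rw [hHdef]; exact recSeq_zero _ _
  have hHsucc : ∀ t, H (t+1) = (package (H t)).1 :: H t := by
    intro t; rw [hHdef]; exact recSeq_succ _ _ t
  have hrob0 : rob 0 = F c₀ 0 := by rw [hrob]; rfl
  have hrobsucc : ∀ t, rob (t+1) = (package (H t)).1 := by
    intro t; rw [hrob]
  have hwt : ∀ t, w t = (package (H t)).2 := by
    intro t; rw [hwdef]
  have hheadH : ∀ t, (H t).head? = some (rob t) := by
    intro t
    cases t with
    | zero => rw [hH0, hrob0]; rfl
    | succ t => rw [hHsucc, hrobsucc]; rfl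
  have hhist : ∀ t, histList rob t = H t := by
    intro t
    induction t with
    | zero => rfl
    | succ t ih =>
      rw [histList_succ, ih, hHsucc, hrobsucc]
  have hINV : ∀ t, ∃ c : Fin n, (H t).head? = some (F c 0) ∧
      (∀ x ∈ Set.range (F c), ∀ i, ρ + s_c < G.dist (S (H t) i) x) := by
    intro t
    induction t with
    | zero =>
      refine ⟨c₀, rfl, ?_⟩
      intro x hx i
      exact lipz [] (F c₀ 0) x i s_c (by have := hc₀ x hx i; omega)
    | succ t ih =>
      obtain ⟨c, hhd, hsafe⟩ := ih
      have hp := hpack (H t) (CORE (H t) c hhd hsafe)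
      simp only [hPROP] at hp
      obtain ⟨c'', hc''1, hc''2⟩ := hp.2.2.2.2.2
      refine ⟨c'', ?_, ?_⟩
      · rw [hHsucc, List.head?_cons, hc''1]
      · intro x hx i
        rw [hHsucc]
        exact lipz (H t) _ x i s_c (by have := hc''2 x hx i; omega)
  have hPROPt : ∀ t, PROP (H t) (package (H t)) := by
    intro t
    obtain ⟨c, hhd, hsafe⟩ := hINV t
    exact hpack _ (CORE (H t) c hhd hsafe)
  refine ⟨rob, w, ⟨?_, ?_⟩, ?_⟩
  · intro i
    have := hc₀ (F c₀ 0) ⟨0, rfl⟩ i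
    rw [hrob0]
    omega
  · intro t
    have hp := hPROPt t
    simp only [hPROP] at hp
    obtain ⟨hch, hhd, hlast, hlen, hsafe, _⟩ := hp
    rw [hwt t]
    refine ⟨hch, ?_, ?_, hlen, ?_⟩
    · rw [hhd, hheadH t]
    · rw [hlast, hrobsucc t]
    · intro u hu i
      rw [hhist t]
      exact hsafe u hu i
  · intro N
    refine ⟨N, le_refl N, ?_⟩
    obtain ⟨c, hhd, _⟩ := hINV N
    have hre : rob N = F c 0 := Option.some.inj ((hheadH N).symm.trans hhd)
    rw [hre]
    refine ⟨hreach _ _, ?_⟩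
    have hsup : G.dist (r 0) (F c 0) ≤
        Finset.sup Finset.univ (fun a : Fin n => G.dist (r 0) (F a 0)) :=
      Finset.le_sup (f := fun a : Fin n => G.dist (r 0) (F a 0)) (Finset.mem_univ c)
    omega
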